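/- Let ε > 0, let P1, P2, P3 ∈ ℝ³ with ‖P_i‖ ≤ 1 be ε-spanning for (θ̄, φ̄), and let θ, φ ∈ ℝ with |θ − θ̄| ≤ ε and |φ − φ̄| ≤ ε. Assume ⟨X(θ,φ), P_i⟩ > 0 for i = 1, 2, 3. Then X(θ,φ) ∈ span⁺(P1, P2, P3). -/

import Mathlib

noncomputable section

open Real

/-- A matrix acting on Euclidean space. -/
def act {m n : ℕ} (A : Matrix (Fin m) (Fin n) ℝ) (v : EuclideanSpace ℝ (Fin n)) :
    EuclideanSpace ℝ (Fin m) :=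
  Matrix.toEuclideanLin A v

/-- Operator norm of a real matrix with respect to the Euclidean norms. -/
def opNorm {m n : ℕ} (A : Matrix (Fin m) (Fin n) ℝ) : ℝ :=
  ‖LinearMap.toContinuousLinearMap (Matrix.toEuclideanLin A)‖

/-- The 2×2 rotation matrix by angle `α`. -/
def R (α : ℝ) : Matrix (Fin 2) (Fin 2) ℝ :=
  !![cos α, -sin α; sin α, cos α]

/-- The orthogonal projection matrix in direction `X θ φ`. -/
def M (θ φ : ℝ) : Matrix (Fin 2) (Fin 3) ℝ :=
  !![-sin θ, cos θ, 0; -cos θ * cos φ, -sin θ * cos φ, sin φ]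

/-- The unit vector parametrized by spherical coordinates. -/
def X (θ φ : ℝ) : EuclideanSpace ℝ (Fin 3) :=
  (WithLp.equiv 2 (Fin 3 → ℝ)).symm ![cos θ * sin φ, sin θ * sin φ, cos φ]

/-- Rotation about the x-axis. -/
def Rx (α : ℝ) : Matrix (Fin 3) (Fin 3) ℝ :=
  !![1, 0, 0; 0, cos α, -sin α; 0, sin α, cos α]

/-- Rotation about the y-axis. -/
def Ry (α : ℝ) : Matrix (Fin 3) (Fin 3) ℝ :=
  !![cos α, 0, -sin α; 0, 1, 0; sin α, 0, cos α]

/-- Rotation about the z-axis. -/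
def Rz (α : ℝ) : Matrix (Fin 3) (Fin 3) ℝ :=
  !![cos α, -sin α, 0; sin α, cos α, 0; 0, 0, 1]

open scoped RealInnerProductSpace

/-- The rotation matrix by the angle π/2. -/
def Rhalfpi : Matrix (Fin 2) (Fin 2) ℝ := !![0, -1; 1, 0]

/-- Three points are ε-spanning for `(θ, φ)` if the projected triangle robustly
contains the origin. -/
def EpsSpanning (ε θ φ : ℝ) (P1 P2 P3 : EuclideanSpace ℝ (Fin 3)) : Prop :=
  ⟪act Rhalfpi (act (M θ φ) P1), act (M θ φ) P2⟫ > 2 * ε * (Real.sqrt 2 + ε) ∧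
  ⟪act Rhalfpi (act (M θ φ) P2), act (M θ φ) P3⟫ > 2 * ε * (Real.sqrt 2 + ε) ∧
  ⟪act Rhalfpi (act (M θ φ) P3), act (M θ φ) P1⟫ > 2 * ε * (Real.sqrt 2 + ε)

/-- The simplicial cone spanned by three vectors with strictly positive coefficients. -/
def spanPos (v1 v2 v3 : EuclideanSpace ℝ (Fin 3)) : Set (EuclideanSpace ℝ (Fin 3)) :=
  {w | ∃ l1 l2 l3 : ℝ, 0 < l1 ∧ 0 < l2 ∧ 0 < l3 ∧ w = l1 • v1 + l2 • v2 + l3 • v3}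

def crossVec (P P' : EuclideanSpace ℝ (Fin 3)) : EuclideanSpace ℝ (Fin 3) :=
  (WithLp.equiv 2 (Fin 3 → ℝ)).symm
    ![P 1 * P' 2 - P 2 * P' 1, P 2 * P' 0 - P 0 * P' 2, P 0 * P' 1 - P 1 * P' 0]

lemma det_eq (θ φ : ℝ) (P P' : EuclideanSpace ℝ (Fin 3)) :
    ⟪act Rhalfpi (act (M θ φ) P), act (M θ φ) P'⟫ = ⟪X θ φ, crossVec P P'⟫ := by
  simp [act, Matrix.toEuclideanLin_apply, PiLp.inner_apply, RCLike.inner_apply, Matrix.mulVec,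
    dotProduct, Fin.sum_univ_three, Fin.sum_univ_two, M, Rhalfpi, X, crossVec]
  linear_combination (cos φ * (P 0 * P' 1 - P 1 * P' 0)) * sin_sq_add_cos_sq θ

lemma coord_sq (P : EuclideanSpace ℝ (Fin 3)) : P 0 ^ 2 + P 1 ^ 2 + P 2 ^ 2 = ‖P‖ ^ 2 := by
  rw [EuclideanSpace.norm_eq, Real.sq_sqrt (by positivity)]
  simp [Fin.sum_univ_three, Real.norm_eq_abs, sq_abs]

lemma crossVec_norm_le (P P' : EuclideanSpace ℝ (Fin 3)) (h : ‖P‖ ≤ 1) (h' : ‖P'‖ ≤ 1) :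
    ‖crossVec P P'‖ ≤ 1 := by
  have h0 := norm_nonneg P
  have h0' := norm_nonneg P'
  have hp : P 0 ^ 2 + P 1 ^ 2 + P 2 ^ 2 ≤ 1 := by rw [coord_sq]; nlinarith
  have hp' : P' 0 ^ 2 + P' 1 ^ 2 + P' 2 ^ 2 ≤ 1 := by rw [coord_sq]; nlinarith
  have hpn : (0:ℝ) ≤ P 0 ^ 2 + P 1 ^ 2 + P 2 ^ 2 := by positivity
  have hpn' : (0:ℝ) ≤ P' 0 ^ 2 + P' 1 ^ 2 + P' 2 ^ 2 := by positivity
  have hsq : ‖crossVec P P'‖ ^ 2 ≤ 1 := by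
    rw [← coord_sq]
    simp only [crossVec, WithLp.equiv_symm_apply, PiLp.toLp_apply, Matrix.cons_val_zero, Matrix.cons_val_one,
      Matrix.head_cons, Matrix.cons_val_two, Matrix.tail_cons]
    nlinarith [sq_nonneg (P 0 * P' 0 + P 1 * P' 1 + P 2 * P' 2), hp, hp', hpn, hpn']
  exact (pow_le_one_iff_of_nonneg (norm_nonneg _) two_ne_zero).1 hsq

lemma X_dist (θ θ' φ φ' : ℝ) : ‖X θ φ - X θ' φ'‖ ≤ |θ - θ'| + |φ - φ'| := by
  have tri : ‖X θ φ - X θ' φ'‖ ≤ ‖X θ φ - X θ' φ‖ + ‖X θ' φ - X θ' φ'‖ := by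
    simpa using norm_sub_le_norm_sub_add_norm_sub (X θ φ) (X θ' φ) (X θ' φ')
  have key : ∀ a b x y : ℝ, (cos a - cos b) ^ 2 + (sin a - sin b) ^ 2 ≤ (a - b) ^ 2 := by
    intro a b x y
    have h1 : 1 - (a - b) ^ 2 / 2 ≤ cos (a - b) := one_sub_sq_div_two_le_cos
    have h2 : (cos a - cos b) ^ 2 + (sin a - sin b) ^ 2 = 2 - 2 * cos (a - b) := by
      rw [cos_sub]
      linear_combination sin_sq_add_cos_sq a + sin_sq_add_cos_sq b
    linarith
  have b1 : ‖X θ φ - X θ' φ‖ ≤ |θ - θ'| := by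
    have hsq : ‖X θ φ - X θ' φ‖ ^ 2 ≤ |θ - θ'| ^ 2 := by
      rw [sq_abs, ← coord_sq]
      simp only [X, PiLp.sub_apply, WithLp.equiv_symm_apply, PiLp.toLp_apply, Matrix.cons_val_zero,
        Matrix.cons_val_one, Matrix.head_cons, Matrix.cons_val_two, Matrix.tail_cons]
      nlinarith [key θ θ' 0 0, sin_sq_le_one φ, sq_nonneg (cos θ - cos θ'),
        sq_nonneg (sin θ - sin θ'), sq_nonneg (sin φ)]
    have := Real.sqrt_le_sqrt hsq
    rwa [Real.sqrt_sq (norm_nonneg _), Real.sqrt_sq (abs_nonneg _)] at this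
  have b2 : ‖X θ' φ - X θ' φ'‖ ≤ |φ - φ'| := by
    have hsq : ‖X θ' φ - X θ' φ'‖ ^ 2 ≤ |φ - φ'| ^ 2 := by
      rw [sq_abs, ← coord_sq]
      simp only [X, PiLp.sub_apply, WithLp.equiv_symm_apply, PiLp.toLp_apply, Matrix.cons_val_zero,
        Matrix.cons_val_one, Matrix.head_cons, Matrix.cons_val_two, Matrix.tail_cons]
      nlinarith [key φ φ' 0 0, sin_sq_add_cos_sq θ', sq_nonneg (sin φ - sin φ'),
        sq_nonneg (cos φ - cos φ')]
    have := Real.sqrt_le_sqrt hsq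
    rwa [Real.sqrt_sq (norm_nonneg _), Real.sqrt_sq (abs_nonneg _)] at this
  linarith

lemma key_identity (θ φ : ℝ) (P1 P2 P3 : EuclideanSpace ℝ (Fin 3)) :
    (⟪X θ φ, crossVec P2 P3⟫ * ⟪X θ φ, P1⟫ + ⟪X θ φ, crossVec P3 P1⟫ * ⟪X θ φ, P2⟫ +
      ⟪X θ φ, crossVec P1 P2⟫ * ⟪X θ φ, P3⟫) • X θ φ =
    ⟪X θ φ, crossVec P2 P3⟫ • P1 + ⟪X θ φ, crossVec P3 P1⟫ • P2 +
      ⟪X θ φ, crossVec P1 P2⟫ • P3 := by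
  ext i
  fin_cases i
  · simp only [Fin.zero_eta, Fin.mk_one, Fin.reduceFinMk, PiLp.smul_apply, PiLp.add_apply, smul_eq_mul, PiLp.inner_apply,
      RCLike.inner_apply, starRingEnd_apply, star_trivial, Fin.sum_univ_three, X, crossVec,
      WithLp.equiv_symm_apply, PiLp.toLp_apply, Matrix.cons_val_zero, Matrix.cons_val_one, Matrix.head_cons,
      Matrix.cons_val_two, Matrix.tail_cons, Fin.isValue]
    linear_combination ((P1 0 * (P2 1 * P3 2 - P2 2 * P3 1) + P1 1 * (P2 2 * P3 0 - P2 0 * P3 2) + P1 2 * (P2 0 * P3 1 - P2 1 * P3 0)) * (cos θ * sin φ) * sin φ ^ 2) * sin_sq_add_cos_sq θ +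
      ((P1 0 * (P2 1 * P3 2 - P2 2 * P3 1) + P1 1 * (P2 2 * P3 0 - P2 0 * P3 2) + P1 2 * (P2 0 * P3 1 - P2 1 * P3 0)) * (cos θ * sin φ)) * sin_sq_add_cos_sq φ
  · simp only [Fin.zero_eta, Fin.mk_one, Fin.reduceFinMk, PiLp.smul_apply, PiLp.add_apply, smul_eq_mul, PiLp.inner_apply,
      RCLike.inner_apply, starRingEnd_apply, star_trivial, Fin.sum_univ_three, X, crossVec,
      WithLp.equiv_symm_apply, PiLp.toLp_apply, Matrix.cons_val_zero, Matrix.cons_val_one, Matrix.head_cons,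
      Matrix.cons_val_two, Matrix.tail_cons, Fin.isValue]
    linear_combination ((P1 0 * (P2 1 * P3 2 - P2 2 * P3 1) + P1 1 * (P2 2 * P3 0 - P2 0 * P3 2) + P1 2 * (P2 0 * P3 1 - P2 1 * P3 0)) * (sin θ * sin φ) * sin φ ^ 2) * sin_sq_add_cos_sq θ +
      ((P1 0 * (P2 1 * P3 2 - P2 2 * P3 1) + P1 1 * (P2 2 * P3 0 - P2 0 * P3 2) + P1 2 * (P2 0 * P3 1 - P2 1 * P3 0)) * (sin θ * sin φ)) * sin_sq_add_cos_sq φ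
  · simp only [Fin.zero_eta, Fin.mk_one, Fin.reduceFinMk, PiLp.smul_apply, PiLp.add_apply, smul_eq_mul, PiLp.inner_apply,
      RCLike.inner_apply, starRingEnd_apply, star_trivial, Fin.sum_univ_three, X, crossVec,
      WithLp.equiv_symm_apply, PiLp.toLp_apply, Matrix.cons_val_zero, Matrix.cons_val_one, Matrix.head_cons,
      Matrix.cons_val_two, Matrix.tail_cons, Fin.isValue]
    linear_combination ((P1 0 * (P2 1 * P3 2 - P2 2 * P3 1) + P1 1 * (P2 2 * P3 0 - P2 0 * P3 2) + P1 2 * (P2 0 * P3 1 - P2 1 * P3 0)) * cos φ * sin φ ^ 2) * sin_sq_add_cos_sq θ +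
      ((P1 0 * (P2 1 * P3 2 - P2 2 * P3 1) + P1 1 * (P2 2 * P3 0 - P2 0 * P3 2) + P1 2 * (P2 0 * P3 1 - P2 1 * P3 0)) * cos φ) * sin_sq_add_cos_sq φ

/-- For ε-spanning points, the perturbed projection direction lies in their positive span. -/
theorem X_mem_spanPos (ε θ' φ' θ φ : ℝ) (hε : 0 < ε)
    (P1 P2 P3 : EuclideanSpace ℝ (Fin 3))
    (hP1 : ‖P1‖ ≤ 1) (hP2 : ‖P2‖ ≤ 1) (hP3 : ‖P3‖ ≤ 1)
    (hspan : EpsSpanning ε θ' φ' P1 P2 P3)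
    (hθ : |θ - θ'| ≤ ε) (hφ : |φ - φ'| ≤ ε)
    (h1 : ⟪X θ φ, P1⟫ > 0) (h2 : ⟪X θ φ, P2⟫ > 0) (h3 : ⟪X θ φ, P3⟫ > 0) :
    X θ φ ∈ spanPos P1 P2 P3 := by
  obtain ⟨hs1, hs2, hs3⟩ := hspan
  rw [det_eq] at hs1 hs2 hs3
  have sqrt2 : (1:ℝ) ≤ Real.sqrt 2 := by
    nlinarith [Real.sq_sqrt (by norm_num : (0:ℝ) ≤ 2), Real.sqrt_nonneg 2]
  have hXd : ‖X θ φ - X θ' φ'‖ ≤ 2 * ε := le_trans (X_dist θ θ' φ φ') (by linarith)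
  have main : ∀ P Q : EuclideanSpace ℝ (Fin 3), ‖P‖ ≤ 1 → ‖Q‖ ≤ 1 →
      2 * ε * (Real.sqrt 2 + ε) < ⟪X θ' φ', crossVec P Q⟫ →
      0 < ⟪X θ φ, crossVec P Q⟫ := by
    intro P Q hP hQ hgt
    have hN := crossVec_norm_le P Q hP hQ
    have hC : |⟪X θ φ - X θ' φ', crossVec P Q⟫| ≤ ‖X θ φ - X θ' φ'‖ * ‖crossVec P Q‖ :=
      abs_real_inner_le_norm _ _
    have hnn := norm_nonneg (X θ φ - X θ' φ')
    have hnn2 := norm_nonneg (crossVec P Q)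
    have h2' : ‖X θ φ - X θ' φ'‖ * ‖crossVec P Q‖ ≤ 2 * ε := by nlinarith
    have hsub : ⟪X θ φ - X θ' φ', crossVec P Q⟫ =
        ⟪X θ φ, crossVec P Q⟫ - ⟪X θ' φ', crossVec P Q⟫ := inner_sub_left _ _ _
    have hlow : -(2 * ε) ≤ ⟪X θ φ, crossVec P Q⟫ - ⟪X θ' φ', crossVec P Q⟫ := by
      rw [← hsub]
      have := (abs_le.1 hC).1
      linarith
    nlinarith
  have hD1 := main P2 P3 hP2 hP3 hs2
  have hD2 := main P3 P1 hP3 hP1 hs3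
  have hD3 := main P1 P2 hP1 hP2 hs1
  set S := ⟪X θ φ, crossVec P2 P3⟫ * ⟪X θ φ, P1⟫ + ⟪X θ φ, crossVec P3 P1⟫ * ⟪X θ φ, P2⟫ +
      ⟪X θ φ, crossVec P1 P2⟫ * ⟪X θ φ, P3⟫ with hSdef
  have hS : 0 < S := by
    rw [hSdef]
    exact add_pos (add_pos (mul_pos hD1 h1) (mul_pos hD2 h2)) (mul_pos hD3 h3)
  refine ⟨⟪X θ φ, crossVec P2 P3⟫ / S, ⟪X θ φ, crossVec P3 P1⟫ / S,
    ⟪X θ φ, crossVec P1 P2⟫ / S, div_pos hD1 hS, div_pos hD2 hS, div_pos hD3 hS, ?_⟩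
  have key := key_identity θ φ P1 P2 P3
  rw [← hSdef] at key
  calc X θ φ = S⁻¹ • (S • X θ φ) := by rw [smul_smul, inv_mul_cancel₀ hS.ne', one_smul]
  _ = (⟪X θ φ, crossVec P2 P3⟫ / S) • P1 + (⟪X θ φ, crossVec P3 P1⟫ / S) • P2 +
      (⟪X θ φ, crossVec P1 P2⟫ / S) • P3 := by
    rw [key, smul_add, smul_add, smul_smul, smul_smul, smul_smul,
      div_eq_inv_mul, div_eq_inv_mul, div_eq_inv_mul]
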